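/- Let w:(0,∞)→(0,∞) be non-decreasing and O-regularly varying at zero and infinity with all four indices positive, and let π be a Lévy measure on ℝ^d \ {0}. Define the rescaled measures π̃_R(A) = w(R)·π(R·A) for R>0 and Borel sets A. Assume the nondegeneracy condition: there exists c0>0 such that for all R>0 and all unit vectors ξ̂, ∫_{|y|≤1} |ξ̂·y|² π̃_R(dy) ≥ c0. Then there exists c2 = c2(w,c0) > 0 such that for all ξ ∈ ℝ^d \ {0}, ∫ [1 − cos(2π ξ·y)] π(dy) ≥ c2 · w(|ξ|^{-1})^{-1}. -/

import Mathlib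

open Filter Topology Real MeasureTheory Set

set_option maxHeartbeats 1000000

/-- Lower bound for the real part of a Lévy symbol under the nondegeneracy
condition **B**: if `w` is non-decreasing, O-RV at zero and infinity with all
four indices positive, and the rescaled measures `μ̃_R(A) = w(R) μ(R A)` satisfy
`∫_{|y|≤1} |ξ̂·y|² μ̃_R(dy) ≥ c0` uniformly in `R > 0` and unit `ξ̂`, then
`∫ (1 − cos(2π ξ·y)) μ(dy) ≥ c2 w(|ξ|⁻¹)⁻¹` for all `ξ ≠ 0`. -/
theorem stmt7 {d : ℕ}
    (μ : Measure (EuclideanSpace ℝ (Fin d)))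
    (hlevy : (∫⁻ y, ENNReal.ofReal (min (‖y‖ ^ 2) 1) ∂μ) < ⊤)
    (hμ0 : μ {0} = 0)
    (w : ℝ → ℝ) (hwpos : ∀ r > 0, 0 < w r) (hmono : MonotoneOn w (Set.Ioi 0))
    (r1 r2 : ℝ → ℝ)
    (hr1 : ∀ x > 0, r1 x = Filter.limsup (fun ε => w (ε * x) / w ε) (𝓝[>] (0:ℝ)))
    (hr2 : ∀ x > 0, r2 x = Filter.limsup (fun ε => w (ε * x) / w ε) Filter.atTop)
    (hb1 : ∀ x > 0, Filter.IsBoundedUnder (· ≤ ·) (𝓝[>] (0:ℝ)) (fun ε => w (ε * x) / w ε))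
    (hb2 : ∀ x > 0, Filter.IsBoundedUnder (· ≤ ·) Filter.atTop (fun ε => w (ε * x) / w ε))
    (p1 q1 p2 q2 : ℝ)
    (hp1 : Filter.Tendsto (fun ε => Real.log (r1 ε) / Real.log ε) (𝓝[>] (0:ℝ)) (𝓝 p1))
    (hq1 : Filter.Tendsto (fun ε => Real.log (r1 ε) / Real.log ε) Filter.atTop (𝓝 q1))
    (hp2 : Filter.Tendsto (fun ε => Real.log (r2 ε) / Real.log ε) (𝓝[>] (0:ℝ)) (𝓝 p2))
    (hq2 : Filter.Tendsto (fun ε => Real.log (r2 ε) / Real.log ε) Filter.atTop (𝓝 q2))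
    (hp1pos : 0 < p1) (hp2pos : 0 < p2) (hq1pos : 0 < q1) (hq2pos : 0 < q2)
    (c0 : ℝ) (hc0 : 0 < c0)
    (hnd : ∀ R > 0, ∀ ξ : EuclideanSpace ℝ (Fin d), ‖ξ‖ = 1 →
      c0 ≤ w R * ∫ y in {y : EuclideanSpace ℝ (Fin d) | ‖y‖ ≤ R},
        ((inner ℝ ξ y : ℝ) / R) ^ 2 ∂μ) :
    ∃ c2 > (0:ℝ), ∀ ξ : EuclideanSpace ℝ (Fin d), ξ ≠ 0 →
      c2 * (w (‖ξ‖⁻¹))⁻¹ ≤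
        ∫ y, (1 - Real.cos (2 * Real.pi * (inner ℝ ξ y : ℝ))) ∂μ := by

  refine ⟨c0 / 2, by positivity, fun ξ hξ => ?_⟩
  set n : ℝ := ‖ξ‖ with hn_def
  have hn : 0 < n := norm_pos_iff.2 hξ
  set R : ℝ := (2 * n)⁻¹ with hR_def
  have hR : 0 < R := by positivity
  set ξh : EuclideanSpace ℝ (Fin d) := n⁻¹ • ξ with hξh_def
  have hξh1 : ‖ξh‖ = 1 := by
    rw [hξh_def, norm_smul, norm_inv, Real.norm_eq_abs, abs_of_pos hn]
    field_simp
    exact hn_def.symm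
  have hinner : ∀ y : EuclideanSpace ℝ (Fin d),
      (inner ℝ ξh y : ℝ) = n⁻¹ * (inner ℝ ξ y : ℝ) := fun y => real_inner_smul_left ξ y n⁻¹
  set f : EuclideanSpace ℝ (Fin d) → ℝ :=
    fun y => 1 - Real.cos (2 * Real.pi * (inner ℝ ξ y : ℝ)) with hf_def
  have hf0 : ∀ y, 0 ≤ f y := fun y => sub_nonneg.2 (Real.cos_le_one _)
  have hfcont : Continuous f :=
    continuous_const.sub (Real.continuous_cos.comp
      (continuous_const.mul (continuous_const.inner continuous_id')))
  -- integrability of the dominating function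
  set g : EuclideanSpace ℝ (Fin d) → ℝ := fun y => min (‖y‖ ^ 2) 1 with hg_def
  have hg0 : ∀ y, 0 ≤ g y := fun y => le_min (by positivity) zero_le_one
  have hgcont : Continuous g := (continuous_norm.pow 2).min continuous_const
  have hgint : Integrable g μ := by
    refine ⟨hgcont.aestronglyMeasurable, ?_⟩
    rw [hasFiniteIntegral_iff_ofReal (Filter.Eventually.of_forall hg0)]
    exact hlevy
  -- integrability of f
  have hfub : ∀ y, f y ≤ (2 * Real.pi ^ 2 * n ^ 2 + 2) * g y := by
    intro y
    have ht2 : f y ≤ (2 * Real.pi * (inner ℝ ξ y : ℝ)) ^ 2 / 2 := by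
      have := Real.one_sub_sq_div_two_le_cos (x := 2 * Real.pi * (inner ℝ ξ y : ℝ))
      simp only [hf_def]; linarith
    have hiy : |(inner ℝ ξ y : ℝ)| ≤ n * ‖y‖ := abs_real_inner_le_norm ξ y
    have hiy2 : (inner ℝ ξ y : ℝ) ^ 2 ≤ n ^ 2 * ‖y‖ ^ 2 := by
      have := sq_le_sq' (neg_le_of_abs_le hiy) (le_of_abs_le hiy)
      calc (inner ℝ ξ y : ℝ) ^ 2 ≤ (n * ‖y‖) ^ 2 := this
        _ = n ^ 2 * ‖y‖ ^ 2 := by ring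
    have ht2' : f y ≤ 2 * Real.pi ^ 2 * (inner ℝ ξ y : ℝ) ^ 2 := by
      have hsq : (2 * Real.pi * (inner ℝ ξ y : ℝ)) ^ 2 / 2
          = 2 * Real.pi ^ 2 * (inner ℝ ξ y : ℝ) ^ 2 := by ring
      exact ht2.trans hsq.le
    rcases le_total (‖y‖ ^ 2) 1 with h1 | h1
    · have hgy : g y = ‖y‖ ^ 2 := min_eq_left h1
      rw [hgy]
      have h2 : 2 * Real.pi ^ 2 * (inner ℝ ξ y : ℝ) ^ 2
          ≤ 2 * Real.pi ^ 2 * (n ^ 2 * ‖y‖ ^ 2) :=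
        mul_le_mul_of_nonneg_left hiy2 (by positivity)
      nlinarith [sq_nonneg ‖y‖]
    · have hgy : g y = 1 := min_eq_right h1
      rw [hgy]
      have hf2 : f y ≤ 2 := by
        have := Real.neg_one_le_cos (2 * Real.pi * (inner ℝ ξ y : ℝ))
        have : (-1:ℝ) ≤ Real.cos (2 * Real.pi * (inner ℝ ξ y : ℝ)) := this
        show 1 - Real.cos (2 * Real.pi * (inner ℝ ξ y : ℝ)) ≤ 2
        linarith
      nlinarith [Real.pi_pos, hn]
  have hfint : Integrable f μ := by
    refine Integrable.mono (hgint.const_mul (2 * Real.pi ^ 2 * n ^ 2 + 2))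
      hfcont.aestronglyMeasurable (Filter.Eventually.of_forall fun y => ?_)
    rw [Real.norm_eq_abs, Real.norm_eq_abs, abs_of_nonneg (hf0 y)]
    have hC : 0 ≤ (2 * Real.pi ^ 2 * n ^ 2 + 2) * g y :=
      mul_nonneg (by positivity) (hg0 y)
    rw [abs_of_nonneg hC]
    exact hfub y
  -- the set
  set S : Set (EuclideanSpace ℝ (Fin d)) := {y | ‖y‖ ≤ R} with hS_def
  have hSm : MeasurableSet S := (isClosed_le continuous_norm continuous_const).measurableSet
  set q : EuclideanSpace ℝ (Fin d) → ℝ := fun y => ((inner ℝ ξh y : ℝ) / R) ^ 2 with hq_def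
  -- pointwise bound on S : q y ≤ f y, and (1/2) * q y ≤ f y
  have hkey : ∀ y ∈ S, q y ≤ f y ∧ (1/2) * q y ≤ f y := by
    intro y hy
    have hy' : ‖y‖ ≤ R := hy
    have hiy : |(inner ℝ ξ y : ℝ)| ≤ n * ‖y‖ := abs_real_inner_le_norm ξ y
    have habs : |2 * Real.pi * (inner ℝ ξ y : ℝ)| ≤ Real.pi := by
      rw [abs_mul, abs_of_pos (by positivity : (0:ℝ) < 2 * Real.pi)]
      have h1 : |(inner ℝ ξ y : ℝ)| ≤ n * R := hiy.trans (by nlinarith)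
      have h2 : n * R = 1 / 2 := by rw [hR_def]; field_simp
      calc 2 * Real.pi * |(inner ℝ ξ y : ℝ)| ≤ 2 * Real.pi * (1/2) := by
            have := Real.pi_pos; nlinarith
        _ = Real.pi := by ring
    have hcos := Real.cos_le_one_sub_mul_cos_sq habs
    have hflb : 8 * (inner ℝ ξ y : ℝ) ^ 2 ≤ f y := by
      have hpi := Real.pi_pos
      have : 2 / Real.pi ^ 2 * (2 * Real.pi * (inner ℝ ξ y : ℝ)) ^ 2
          = 8 * (inner ℝ ξ y : ℝ) ^ 2 := by field_simp; ring
      simp only [hf_def]; nlinarith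
    have hqval : q y = 4 * (inner ℝ ξ y : ℝ) ^ 2 := by
      have hn0 : n ≠ 0 := hn.ne'
      show ((inner ℝ ξh y : ℝ) / R) ^ 2 = 4 * (inner ℝ ξ y : ℝ) ^ 2
      rw [hinner y, hR_def, div_inv_eq_mul]
      field_simp
      ring
    constructor
    · rw [hqval]; linarith [hflb, sq_nonneg ((inner ℝ ξ y : ℝ))]
    · rw [hqval]
      calc (1:ℝ)/2 * (4 * (inner ℝ ξ y : ℝ) ^ 2) ≤ 8 * (inner ℝ ξ y : ℝ) ^ 2 := by
            nlinarith [sq_nonneg ((inner ℝ ξ y : ℝ))]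
        _ ≤ f y := hflb
  have hq0 : ∀ y, 0 ≤ q y := fun y => sq_nonneg _
  have hqcont : Continuous q := by
    exact (((continuous_const.inner continuous_id')).div_const R).pow 2
  have hqint : IntegrableOn q S μ := by
    refine Integrable.mono hfint.integrableOn hqcont.aestronglyMeasurable ?_
    rw [ae_restrict_iff' hSm]
    refine Filter.Eventually.of_forall fun y hy => ?_
    rw [Real.norm_eq_abs, Real.norm_eq_abs, abs_of_nonneg (hq0 y), abs_of_nonneg (hf0 y)]
    exact (hkey y hy).1
  -- nondegeneracy
  have hI := hnd R hR ξh hξh1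
  have hwR : 0 < w R := hwpos R hR
  have hIlb : c0 / w R ≤ ∫ y in S, q y ∂μ := by
    rw [div_le_iff₀ hwR]
    calc c0 ≤ w R * ∫ y in S, q y ∂μ := hI
      _ = (∫ y in S, q y ∂μ) * w R := mul_comm _ _
  -- chain of inequalities
  have step1 : (1/2) * ∫ y in S, q y ∂μ ≤ ∫ y in S, f y ∂μ := by
    rw [← integral_const_mul]
    exact setIntegral_mono_on (hqint.const_mul _) hfint.integrableOn hSm
      fun y hy => (hkey y hy).2
  have step2 : ∫ y in S, f y ∂μ ≤ ∫ y, f y ∂μ :=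
    setIntegral_le_integral hfint (Filter.Eventually.of_forall hf0)
  have hwmono : w R ≤ w n⁻¹ := by
    refine hmono (Set.mem_Ioi.2 hR) (Set.mem_Ioi.2 (by positivity)) ?_
    rw [hR_def]
    apply inv_anti₀ (by positivity)
    nlinarith
  have hwn : 0 < w n⁻¹ := hwpos _ (by positivity)
  have hfinal : c0 / 2 * (w n⁻¹)⁻¹ ≤ (1/2) * (c0 / w R) := by
    have h1 : (w n⁻¹)⁻¹ ≤ (w R)⁻¹ := inv_anti₀ hwR hwmono
    have h2 : c0 / 2 * (w n⁻¹)⁻¹ ≤ c0 / 2 * (w R)⁻¹ :=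
      mul_le_mul_of_nonneg_left h1 (by positivity)
    have h3 : c0 / 2 * (w R)⁻¹ = 1/2 * (c0 / w R) := by
      rw [div_eq_mul_inv c0 (w R)]; ring
    exact h2.trans h3.le
  calc c0 / 2 * (w n⁻¹)⁻¹ ≤ (1/2) * (c0 / w R) := hfinal
    _ ≤ (1/2) * ∫ y in S, q y ∂μ := by nlinarith
    _ ≤ ∫ y in S, f y ∂μ := step1
    _ ≤ ∫ y, f y ∂μ := step2
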